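/- arXiv:1512.07204 — 3 statements merged into one kernel-verified Lean document; each statement's English description precedes it below -/
import Mathlib

section
/- Let F be a field of characteristic ≠ 2, let S = [[a, b/2], [b/2, c]] with d = b² - 4ac ≠ 0 and D = d/4 a non-square in F. Then the map sending the matrix [[x + y·b/2, y·c], [-y·a, x - y·b/2]] to x + y·√D is a ring isomorphism from the algebra A_S = {g ∈ M₂(F) : ᵗg S g = det(g) S} onto the quadratic field extension K = F(√D). In particular, every nonzero element of A_S is invertible. -/
open Matrix

theorem stmt2 {F : Type*} [Field F] (h2 : (2 : F) ≠ 0) (a b c d D : F)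
    (hd : d = b ^ 2 - 4 * a * c) (hd0 : d ≠ 0) (hD : D = d / 4)
    (hDns : ∀ x : F, x ^ 2 ≠ D) :
    ∃ φ : AdjoinRoot (Polynomial.X ^ 2 - Polynomial.C D) →+* Matrix (Fin 2) (Fin 2) F,
      Function.Injective φ ∧
      (∀ x y : F,
        φ (AdjoinRoot.of (Polynomial.X ^ 2 - Polynomial.C D) x +
            AdjoinRoot.of (Polynomial.X ^ 2 - Polynomial.C D) y *
              AdjoinRoot.root (Polynomial.X ^ 2 - Polynomial.C D)) =
          !![x + y * b / 2, y * c; -(y * a), x - y * b / 2]) ∧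
      Set.range φ =
        {g : Matrix (Fin 2) (Fin 2) F |
          gᵀ * !![a, b / 2; b / 2, c] * g = g.det • !![a, b / 2; b / 2, c]} ∧
      (∀ g : Matrix (Fin 2) (Fin 2) F,
        gᵀ * !![a, b / 2; b / 2, c] * g = g.det • !![a, b / 2; b / 2, c] →
        g ≠ 0 → IsUnit g) := by
  classical
  have h4 : (4 : F) ≠ 0 := by
    intro h; apply h2
    have : (2 : F) * 2 = 0 := by rw [show (2:F)*2 = 4 by norm_num, h]
    rcases mul_eq_zero.mp this with h' | h' <;> exact h'
  have hb : b / 2 * 2 = b := div_mul_cancel₀ b h2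
  have hD' : D = (b / 2) ^ 2 - a * c := by
    rw [hD, hd, div_eq_iff h4]
    field_simp
    ring
  have ha : a ≠ 0 := by
    intro h0
    exact hDns (b / 2) (by linear_combination c * h0 - hD')
  have hc : c ≠ 0 := by
    intro h0
    exact hDns (b / 2) (by linear_combination a * h0 - hD')
  -- anisotropy of the quadratic form
  have aniso : ∀ u v : F, a * u ^ 2 + 2 * (b / 2) * u * v + c * v ^ 2 = 0 → u = 0 ∧ v = 0 := by
    intro u v h
    rcases eq_or_ne v 0 with hv | hv
    · subst hv
      refine ⟨?_, rfl⟩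
      have hu2 : a * u ^ 2 = 0 := by linear_combination h
      rcases mul_eq_zero.mp hu2 with h' | h'
      · exact absurd h' ha
      · exact pow_eq_zero_iff (two_ne_zero) |>.mp h'
    · exfalso
      apply hDns ((a * u + (b / 2) * v) / v)
      rw [div_pow, div_eq_iff (pow_ne_zero 2 hv)]
      linear_combination a * h - v ^ 2 * hD'
  haveI : Fact (Irreducible (Polynomial.X ^ 2 - Polynomial.C D)) :=
    ⟨X_pow_sub_C_irreducible_of_prime Nat.prime_two (fun x => hDns x)⟩
  set P : Polynomial F := Polynomial.X ^ 2 - Polynomial.C D with hP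
  set J : Matrix (Fin 2) (Fin 2) F := !![b / 2, c; -a, -b / 2] with hJdef
  have hJ : Polynomial.aeval J P = 0 := by
    simp only [hP, map_sub, map_pow, Polynomial.aeval_X, Polynomial.aeval_C]
    rw [sub_eq_zero, pow_two]
    ext i j
    fin_cases i <;> fin_cases j <;>
      simp [hJdef, Matrix.mul_apply, Fin.sum_univ_two, Matrix.algebraMap_matrix_apply] <;>
      (first | ring1 | (rw [hD']; ring))
  have hzero : ∀ f ∈ Ideal.span {P}, (Polynomial.aeval J).toRingHom f = 0 := by
    intro f hf
    rw [Ideal.mem_span_singleton] at hf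
    obtain ⟨g, rfl⟩ := hf
    show (Polynomial.aeval J) (P * g) = 0
    rw [_root_.map_mul, hJ, zero_mul]
  set φ : AdjoinRoot P →+* Matrix (Fin 2) (Fin 2) F :=
    Ideal.Quotient.lift (Ideal.span {P}) (Polynomial.aeval J).toRingHom hzero with hφdef
  have hφmk : ∀ f : Polynomial F, φ (AdjoinRoot.mk P f) = Polynomial.aeval J f := fun f => rfl
  have hform : ∀ x y : F,
      φ (AdjoinRoot.of P x + AdjoinRoot.of P y * AdjoinRoot.root P) =
        !![x + y * b / 2, y * c; -(y * a), x - y * b / 2] := by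
    intro x y
    have h1 : AdjoinRoot.of P x + AdjoinRoot.of P y * AdjoinRoot.root P =
        AdjoinRoot.mk P (Polynomial.C x + Polynomial.C y * Polynomial.X) := by
      rw [_root_.map_add, _root_.map_mul, AdjoinRoot.mk_X]
      rfl
    rw [h1, hφmk, _root_.map_add, _root_.map_mul, Polynomial.aeval_C, Polynomial.aeval_C,
      Polynomial.aeval_X]
    ext i j
    fin_cases i <;> fin_cases j <;>
      simp [hJdef, Matrix.mul_apply, Fin.sum_univ_two, Matrix.algebraMap_matrix_apply] <;>
      ring
  have hrep : ∀ z : AdjoinRoot P, ∃ x y : F,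
      z = AdjoinRoot.of P x + AdjoinRoot.of P y * AdjoinRoot.root P := by
    intro z
    obtain ⟨f, rfl⟩ := AdjoinRoot.mk_surjective z
    have hm : P.Monic := Polynomial.monic_X_pow_sub_C D two_ne_zero
    refine ⟨(f %ₘ P).coeff 0, (f %ₘ P).coeff 1, ?_⟩
    have hdeg : (f %ₘ P).degree ≤ 1 := by
      have h1 := Polynomial.degree_modByMonic_lt f hm
      have hq : P.degree = 2 := by
        rw [hP]; exact Polynomial.degree_X_pow_sub_C (by norm_num) D
      rw [hq] at h1
      exact Order.le_of_lt_succ h1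
    conv_lhs => rw [← Polynomial.modByMonic_add_div f P]
    rw [_root_.map_add, _root_.map_mul, AdjoinRoot.mk_self, zero_mul, add_zero]
    conv_lhs => rw [Polynomial.eq_X_add_C_of_degree_le_one hdeg]
    rw [_root_.map_add, _root_.map_mul, AdjoinRoot.mk_X, add_comm]
    rfl
  have hmem : ∀ x y : F,
      (!![x + y * b / 2, y * c; -(y * a), x - y * b / 2] : Matrix (Fin 2) (Fin 2) F) ∈
        {g : Matrix (Fin 2) (Fin 2) F |
          gᵀ * !![a, b / 2; b / 2, c] * g = g.det • !![a, b / 2; b / 2, c]} := by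
    intro x y
    show _ = _
    ext i j
    fin_cases i <;> fin_cases j <;>
      · simp [Matrix.mul_apply, Fin.sum_univ_two, Matrix.det_fin_two, Matrix.transpose_apply,
          Matrix.vecHead, Matrix.vecTail]
        ring
  have hrange : Set.range φ =
      {g : Matrix (Fin 2) (Fin 2) F |
        gᵀ * !![a, b / 2; b / 2, c] * g = g.det • !![a, b / 2; b / 2, c]} := by
    ext g
    constructor
    · rintro ⟨z, rfl⟩
      obtain ⟨x, y, rfl⟩ := hrep z
      rw [hform]
      exact hmem x y
    · intro hg
      obtain ⟨p, q, r, s, rfl⟩ : ∃ p q r s, g = !![p, q; r, s] :=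
        ⟨g 0 0, g 0 1, g 1 0, g 1 1, Matrix.eta_fin_two g⟩
      simp only [Set.mem_setOf_eq] at hg
      have E1 : a * p ^ 2 + 2 * (b / 2) * p * r + c * r ^ 2 = (p * s - q * r) * a := by
        have h00 := congrFun (congrFun hg 0) 0
        simp [Matrix.mul_apply, Fin.sum_univ_two, Matrix.det_fin_two, Matrix.transpose_apply,
          Matrix.vecHead, Matrix.vecTail] at h00
        linear_combination h00
      have E2 : a * p * q + 2 * (b / 2) * q * r + c * r * s = 0 := by
        have h01 := congrFun (congrFun hg 0) 1
        simp [Matrix.mul_apply, Fin.sum_univ_two, Matrix.det_fin_two, Matrix.transpose_apply,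
          Matrix.vecHead, Matrix.vecTail] at h01
        linear_combination h01
      have E3 : a * q ^ 2 + 2 * (b / 2) * q * s + c * s ^ 2 = (p * s - q * r) * c := by
        have h11 := congrFun (congrFun hg 1) 1
        simp [Matrix.mul_apply, Fin.sum_univ_two, Matrix.det_fin_two, Matrix.transpose_apply,
          Matrix.vecHead, Matrix.vecTail] at h11
        linear_combination h11
      have L1 : a * (p - s) + b * r = 0 := by
        rcases eq_or_ne (p * s - q * r) 0 with hdet | hdet
        · have e1 : a * p ^ 2 + 2 * (b / 2) * p * r + c * r ^ 2 = 0 := by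
            rw [E1, hdet, zero_mul]
          have e3 : a * q ^ 2 + 2 * (b / 2) * q * s + c * s ^ 2 = 0 := by
            rw [E3, hdet, zero_mul]
          obtain ⟨hp0, hr0⟩ := aniso p r e1
          obtain ⟨hq0, hs0⟩ := aniso q s e3
          rw [hp0, hr0, hs0]; ring
        · have key : (p * s - q * r) * (a * (p - s) + b * r) = 0 := by
            rw [← hb]
            linear_combination s * E1 - r * E2
          exact (mul_eq_zero.mp key).resolve_left hdet
      have L2 : a * q + c * r = 0 := by
        rcases eq_or_ne (p * s - q * r) 0 with hdet | hdet
        · have e1 : a * p ^ 2 + 2 * (b / 2) * p * r + c * r ^ 2 = 0 := by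
            rw [E1, hdet, zero_mul]
          have e3 : a * q ^ 2 + 2 * (b / 2) * q * s + c * s ^ 2 = 0 := by
            rw [E3, hdet, zero_mul]
          obtain ⟨hp0, hr0⟩ := aniso p r e1
          obtain ⟨hq0, hs0⟩ := aniso q s e3
          rw [hq0, hr0]; ring
        · have key : (p * s - q * r) * (a * q + c * r) = 0 := by
            linear_combination p * E2 - q * E1
          exact (mul_eq_zero.mp key).resolve_left hdet
      refine ⟨AdjoinRoot.of P ((p + s) / 2) + AdjoinRoot.of P (-r / a) * AdjoinRoot.root P, ?_⟩
      rw [hform]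
      ext i j
      fin_cases i <;> fin_cases j
      · simp only [Matrix.cons_val', Matrix.cons_val_zero, Matrix.cons_val_one, Matrix.head_cons,
          Matrix.head_fin_const, Matrix.empty_val', Matrix.cons_val_fin_one]
        show (p + s) / 2 + -r / a * b / 2 = p
        field_simp
        first
          | linear_combination L1
          | linear_combination -L1
          | linear_combination 2 * L1
          | linear_combination -2 * L1
      · show -r / a * c = q
        field_simp
        first
          | linear_combination L2
          | linear_combination -L2
          | linear_combination c * L2
          | linear_combination -(c * L2)
      · show -(-r / a * a) = r
        field_simp
      · show (p + s) / 2 - -r / a * b / 2 = s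
        field_simp
        first
          | linear_combination L1
          | linear_combination -L1
          | linear_combination 2 * L1
          | linear_combination -2 * L1
  refine ⟨φ, RingHom.injective φ, hform, hrange, ?_⟩
  intro g hg hg0
  have : g ∈ Set.range φ := hrange ▸ Set.mem_setOf_eq ▸ hg
  obtain ⟨z, rfl⟩ := this
  have hz : z ≠ 0 := fun h => hg0 (by rw [h, map_zero])
  exact (isUnit_iff_ne_zero.mpr hz).map φ
end

section
/- Let F be a field and let S be an invertible symmetric 2×2 matrix over F. For g ∈ GL(2, F) with ᵗg S g = det(g) S, the 4×4 block matrix ι(g) = [[g, 0], [0, det(g)·ᵗg⁻¹]] lies in GSp(4, F) with similitude factor λ(ι(g)) = det(g), and ι : T_S(F) → GSp(4, F) is an injective group homomorphism. -/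
open Matrix

theorem stmt3 {F : Type*} [Field F] (S : Matrix (Fin 2) (Fin 2) F)
    (hsym : Sᵀ = S) (hdet : S.det ≠ 0)
    (J : Matrix (Fin 2 ⊕ Fin 2) (Fin 2 ⊕ Fin 2) F)
    (hJ : J = Matrix.fromBlocks 0 1 (-1) 0)
    (ι : Matrix (Fin 2) (Fin 2) F → Matrix (Fin 2 ⊕ Fin 2) (Fin 2 ⊕ Fin 2) F)
    (hι : ∀ g, ι g = Matrix.fromBlocks g 0 0 (g.det • (g⁻¹)ᵀ)) :
    (∀ g : Matrix (Fin 2) (Fin 2) F, IsUnit g.det → gᵀ * S * g = g.det • S →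
        (ι g)ᵀ * J * ι g = g.det • J ∧ IsUnit g.det) ∧
    (∀ g h : Matrix (Fin 2) (Fin 2) F, IsUnit g.det → IsUnit h.det →
        gᵀ * S * g = g.det • S → hᵀ * S * h = h.det • S →
        ι (g * h) = ι g * ι h) ∧
    (∀ g h : Matrix (Fin 2) (Fin 2) F, IsUnit g.det → IsUnit h.det →
        gᵀ * S * g = g.det • S → hᵀ * S * h = h.det • S →
        ι g = ι h → g = h) := by
  refine ⟨?_, ?_, ?_⟩
  · intro g hg _
    refine ⟨?_, hg⟩
    have h1 : g⁻¹ * g = 1 := Matrix.nonsing_inv_mul g hg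
    have h2 : g * g⁻¹ = 1 := Matrix.mul_nonsing_inv g hg
    subst hJ
    rw [hι]
    simp only [Matrix.fromBlocks_transpose, Matrix.fromBlocks_multiply,
      Matrix.transpose_smul, Matrix.transpose_transpose, Matrix.fromBlocks_smul,
      Matrix.mul_zero, Matrix.zero_mul, add_zero, zero_add, neg_zero,
      Matrix.transpose_zero, Matrix.mul_one, Matrix.one_mul, Matrix.mul_smul, Matrix.smul_mul,
      Matrix.mul_neg, Matrix.neg_mul, ← Matrix.transpose_mul, h1, h2,
      Matrix.transpose_one, smul_zero, smul_neg]
  · intro g h hg hh _ _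
    rw [hι, hι, hι, Matrix.fromBlocks_multiply]
    simp only [Matrix.mul_zero, Matrix.zero_mul, add_zero, zero_add]
    congr 1
    rw [Matrix.det_mul, Matrix.mul_inv_rev, Matrix.transpose_mul,
      Matrix.mul_smul, Matrix.smul_mul, smul_smul, mul_comm]
  · intro g h _ _ _ _ he
    rw [hι, hι] at he
    have := congrArg Matrix.toBlocks₁₁ he
    simpa [Matrix.toBlocks_fromBlocks₁₁] using this
end

section
/- For all real β > 0, p > 0, and real ν > 1, the integral over x ∈ ℝ of (β - i x)^{-ν} e^{-i p x} dx equals 2π p^{ν-1} e^{-β p} / Γ(ν), where (β - ix)^{-ν} is defined using the principal branch of the logarithm. -/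
open MeasureTheory Complex Set Filter Metric FourierTransform
open scoped Real Topology

lemma aux_integrableOn {ν b : ℝ} (hν : 0 < ν) (hb : 0 < b) :
    IntegrableOn (fun t : ℝ => t ^ (ν - 1) * Real.exp (-(b * t))) (Set.Ioi 0) := by
  have h0 := Real.GammaIntegral_convergent hν
  have h1 : IntegrableOn (fun x : ℝ => Real.exp (-(b*x)) * (b*x) ^ (ν - 1)) (Ioi 0) := by
    have := (integrableOn_Ioi_comp_mul_left_iff
      (fun x : ℝ => Real.exp (-x) * x ^ (ν - 1)) 0 hb).mpr (by simpa using h0)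
    simpa using this
  have h2 := h1.const_mul (b ^ (1 - ν))
  refine IntegrableOn.congr_fun h2 (fun x hx => ?_) measurableSet_Ioi
  rw [mem_Ioi] at hx
  rw [Real.mul_rpow hb.le hx.le]
  rw [show b ^ (1-ν) * (Real.exp (-(b*x)) * (b ^ (ν-1) * x ^ (ν-1)))
      = (b ^ (1-ν) * b ^ (ν-1)) * (x ^ (ν-1) * Real.exp (-(b*x))) by ring]
  rw [← Real.rpow_add hb]
  norm_num

lemma aux_norm {ν : ℝ} (w : ℂ) {t : ℝ} (ht : 0 < t) :
    ‖(t:ℂ) ^ ((ν:ℂ) - 1) * Complex.exp (-(w * t))‖ = t ^ (ν - 1) * Real.exp (-(w.re * t)) := by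
  rw [norm_mul,
    Complex.norm_cpow_eq_rpow_re_of_pos ht, Complex.norm_exp]
  simp [Complex.mul_re]

lemma aux_meas {ν : ℝ} (w : ℂ) :
    AEStronglyMeasurable (fun t : ℝ => (t:ℂ) ^ ((ν:ℂ)-1) * Complex.exp (-(w*t)))
      (volume.restrict (Ioi 0)) := by
  apply ContinuousOn.aestronglyMeasurable _ measurableSet_Ioi
  intro t ht
  exact ((Complex.continuousAt_ofReal_cpow_const t _ (Or.inr (ne_of_gt ht))).mul
    ((Complex.continuous_exp.comp
      ((continuous_const.mul Complex.continuous_ofReal).neg)).continuousAt)).continuousWithinAt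

lemma aux_int {ν : ℝ} (hν : 0 < ν) {w : ℂ} (hw : 0 < w.re) :
    IntegrableOn (fun t : ℝ => (t:ℂ) ^ ((ν:ℂ)-1) * Complex.exp (-(w*t))) (Ioi 0) := by
  refine Integrable.mono' (aux_integrableOn hν hw) (aux_meas w) ?_
  rw [ae_restrict_iff' measurableSet_Ioi]
  exact ae_of_all _ fun t ht => le_of_eq (aux_norm w ht)

lemma aux_laplace {ν : ℝ} (hν : 0 < ν) {z : ℂ} (hz : 0 < z.re) :
    ∫ t in Ioi (0:ℝ), (t:ℂ) ^ ((ν:ℂ) - 1) * Complex.exp (-(z * t)) =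
      Complex.Gamma ν * z ^ (-(ν:ℂ)) := by
  set U : Set ℂ := {w : ℂ | 0 < w.re} with hU
  have hUopen : IsOpen U := isOpen_lt continuous_const Complex.continuous_re
  set g : ℂ → ℂ := fun w => ∫ t in Ioi (0:ℝ), (t:ℂ) ^ ((ν:ℂ) - 1) * Complex.exp (-(w * t))
    with hg
  set h : ℂ → ℂ := fun w => Complex.Gamma ν * w ^ (-(ν:ℂ)) with hh
  -- g differentiable on U
  have hgdiff : DifferentiableOn ℂ g U := by
    intro z₀ hz₀
    rw [hU, mem_setOf_eq] at hz₀
    set ε : ℝ := z₀.re / 2 with hε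
    have hεpos : 0 < ε := by positivity
    have key := hasDerivAt_integral_of_dominated_loc_of_deriv_le (μ := volume.restrict (Ioi 0))
      (F := fun (w : ℂ) (t : ℝ) => (t:ℂ) ^ ((ν:ℂ)-1) * Complex.exp (-(w*t)))
      (F' := fun (w : ℂ) (t : ℝ) => (t:ℂ) ^ ((ν:ℂ)-1) * (Complex.exp (-(w*t)) * (-(t:ℂ))))
      (x₀ := z₀) (bound := fun t => t ^ ((ν+1) - 1) * Real.exp (-(ε * t))) (ball_mem_nhds z₀ hεpos)
      (Eventually.of_forall fun w => aux_meas w) (aux_int hν hz₀)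
      ?_ ?_ ((aux_integrableOn (by linarith) hεpos))
      ?_
    · exact (key.2.differentiableAt).differentiableWithinAt
    · -- measurability of F' z₀
      apply ContinuousOn.aestronglyMeasurable _ measurableSet_Ioi
      intro t ht
      refine ((Complex.continuousAt_ofReal_cpow_const t _ (Or.inr (ne_of_gt ht))).mul
        (((Complex.continuous_exp.comp
          ((continuous_const.mul Complex.continuous_ofReal).neg)).mul
          Complex.continuous_ofReal.neg).continuousAt)).continuousWithinAt
    · -- bound
      rw [ae_restrict_iff' measurableSet_Ioi]
      refine ae_of_all _ fun t ht w hw => ?_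
      rw [mem_Ioi] at ht
      have hre : ε ≤ w.re := by
        rw [mem_ball, Complex.dist_eq] at hw
        have h2 := (Complex.abs_re_le_norm (w - z₀)).trans_lt hw
        rw [Complex.sub_re] at h2
        have := abs_lt.mp h2
        rw [hε]; linarith [this.1]
      have : ‖(t:ℂ) ^ ((ν:ℂ)-1) * (Complex.exp (-(w*t)) * (-(t:ℂ)))‖
          = t ^ (ν - 1) * (Real.exp (-(w.re * t)) * t) := by
        rw [norm_mul, norm_mul,
          Complex.norm_cpow_eq_rpow_re_of_pos ht, Complex.norm_exp,
          norm_neg]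
        simp [Complex.mul_re, Complex.norm_real, abs_of_pos ht]
      rw [this]
      have ht' : t ^ (ν - 1) * (Real.exp (-(w.re * t)) * t) = t ^ (ν + 1 - 1) * Real.exp (-(w.re*t)) := by
        rw [show ν + 1 - 1 = (ν - 1) + 1 by ring, Real.rpow_add ht, Real.rpow_one]; ring
      rw [ht']
      refine mul_le_mul_of_nonneg_left ?_ (Real.rpow_nonneg ht.le _)
      exact Real.exp_le_exp.mpr (by nlinarith)
    · -- differentiability pointwise
      rw [ae_restrict_iff' measurableSet_Ioi]
      refine ae_of_all _ fun t ht w hw => ?_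
      have := (((hasDerivAt_id w).mul_const (t:ℂ)).neg.cexp).const_mul ((t:ℂ)^((ν:ℂ)-1))
      simpa using this
  have hganal : AnalyticOnNhd ℂ g U := hgdiff.analyticOnNhd hUopen
  have hhanal : AnalyticOnNhd ℂ h U := by
    apply DifferentiableOn.analyticOnNhd _ hUopen
    intro w hw
    refine (((differentiableAt_id).cpow (differentiableAt_const _) ?_).const_mul _).differentiableWithinAt
    exact Or.inl hw
  have heq : ∀ r : ℝ, 0 < r → g r = h r := by
    intro r hr
    have := Complex.integral_cpow_mul_exp_neg_mul_Ioi (a := (ν:ℂ))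
      (by simpa using hν) hr
    rw [hg, hh]
    simp only []
    rw [this, mul_comm]
    congr 1
    rw [one_div, Complex.inv_cpow, ← Complex.cpow_neg]
    rw [Complex.arg_ofReal_of_nonneg hr.le]
    exact Real.pi_ne_zero.symm
  have h1U : (1:ℂ) ∈ U := by simp [hU]
  have hfreq : ∃ᶠ w in 𝓝[≠] (1:ℂ), g w = h w := by
    have htend : Tendsto (fun r : ℝ => (r:ℂ)) (𝓝[>] (1:ℝ)) (𝓝[≠] (1:ℂ)) := by
      apply tendsto_nhdsWithin_of_tendsto_nhds_of_eventually_within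
      · exact (Complex.continuous_ofReal.tendsto 1).mono_left nhdsWithin_le_nhds
      · filter_upwards [self_mem_nhdsWithin] with r hr
        simp only [mem_Ioi] at hr
        simp only [mem_compl_iff, mem_singleton_iff]
        exact_mod_cast ne_of_gt hr
    apply htend.frequently
    apply Eventually.frequently
    filter_upwards [self_mem_nhdsWithin] with r hr
    exact heq r (lt_trans one_pos hr)
  have := hganal.eqOn_of_preconnected_of_frequently_eq hhanal
    ((convex_halfSpace_re_gt 0).isPreconnected) h1U hfreq
  exact this hz

theorem stmt7 (β p ν : ℝ) (hβ : 0 < β) (hp : 0 < p) (hν : 1 < ν) :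
    ∫ x : ℝ, ((β : ℂ) - Complex.I * x) ^ (-(ν : ℂ)) * Complex.exp (-(Complex.I * p * x)) =
      2 * Real.pi * (p : ℂ) ^ ((ν : ℂ) - 1) * Complex.exp (-(β * p : ℝ)) /
        Complex.Gamma ν := by
  have hν0 : (0:ℝ) < ν := by linarith
  set f : ℝ → ℂ := (Ioi (0:ℝ)).indicator
      (fun t => (t:ℂ) ^ ((ν:ℂ)-1) * Complex.exp (-((β:ℂ)*t))) with hf
  have hβre : (0:ℝ) < ((β:ℂ)).re := by simpa using hβ
  have hf_int : Integrable f :=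
    (integrable_indicator_iff measurableSet_Ioi).mpr (aux_int hν0 hβre)
  -- Fourier transform of f
  have hFf : ∀ ξ : ℝ, 𝓕 f ξ = Complex.Gamma ν * ((β:ℂ) + 2*Real.pi*ξ*Complex.I) ^ (-(ν:ℂ)) := by
    intro ξ
    rw [Real.fourier_real_eq_integral_exp_smul]
    have h1 : (fun v : ℝ => Complex.exp (↑(-2 * Real.pi * v * ξ) * Complex.I) • f v)
        = (Ioi (0:ℝ)).indicator (fun v =>
            (v:ℂ) ^ ((ν:ℂ)-1) * Complex.exp (-(((β:ℂ) + 2*Real.pi*ξ*Complex.I) * v))) := by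
      ext v
      by_cases h : v ∈ Ioi (0:ℝ)
      · rw [hf]
        rw [Set.indicator_of_mem h, Set.indicator_of_mem h, smul_eq_mul]
        rw [show Complex.exp (↑(-2 * Real.pi * v * ξ) * Complex.I) *
            ((v:ℂ) ^ ((ν:ℂ)-1) * Complex.exp (-((β:ℂ)*v)))
          = (v:ℂ) ^ ((ν:ℂ)-1) * (Complex.exp (↑(-2 * Real.pi * v * ξ) * Complex.I) *
              Complex.exp (-((β:ℂ)*v))) by ring, ← Complex.exp_add]
        congr 2
        push_cast
        ring
      · rw [hf, Set.indicator_of_notMem h, Set.indicator_of_notMem h, smul_zero]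
    rw [h1, integral_indicator measurableSet_Ioi]
    exact aux_laplace hν0 (by simpa using hβ)
  -- integrability of 𝓕 f
  have habs : ∀ ξ : ℝ, min β 1 / 2 * (1 + ‖ξ‖) ≤ ‖(β:ℂ) + 2*Real.pi*ξ*Complex.I‖ := by
    intro ξ
    set z : ℂ := (β:ℂ) + 2*Real.pi*ξ*Complex.I with hz
    have hre : z.re = β := by simp [hz]
    have him : z.im = 2*Real.pi*ξ := by simp [hz]
    have h1 : β ≤ ‖z‖ := by rw [← hre]; exact (Complex.abs_re_le_norm z).trans' (le_abs_self _)
    have h2 : |ξ| ≤ ‖z‖ := by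
      have := (Complex.abs_im_le_norm z)
      rw [him, abs_mul, abs_mul] at this
      rw [show |(2:ℝ)| = 2 from abs_of_pos two_pos, abs_of_pos Real.pi_pos] at this
      nlinarith [abs_nonneg ξ, Real.pi_gt_three]
    have hm : min β 1 ≤ β := min_le_left _ _
    have hm1 : min β 1 ≤ 1 := min_le_right _ _
    rw [Real.norm_eq_abs]
    nlinarith [abs_nonneg ξ]
  have hFf_int : Integrable (𝓕 f) := by
    have hc : (0:ℝ) < min β 1 / 2 := by positivity
    have hbase : Integrable (fun ξ : ℝ => (1 + ‖ξ‖) ^ (-ν)) :=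
      integrable_one_add_norm (E := ℝ) (by simpa using hν)
    refine Integrable.mono' ((hbase.const_mul (‖Complex.Gamma ν‖ * (min β 1 / 2) ^ (-ν)))) ?_ ?_
    · -- measurability
      rw [funext hFf]
      apply Continuous.aestronglyMeasurable
      refine continuous_const.mul ?_
      rw [continuous_iff_continuousAt]
      intro ξ
      have hb : Continuous (fun ξ : ℝ => (β:ℂ) + 2*Real.pi*ξ*Complex.I) := by continuity
      refine (continuousAt_cpow_const ?_).comp hb.continuousAt
      exact Or.inl (by simpa using hβ)
    · refine ae_of_all _ fun ξ => ?_
      rw [hFf ξ, norm_mul]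
      have hzne : (0:ℝ) < ‖(β:ℂ) + 2*Real.pi*ξ*Complex.I‖ :=
        lt_of_lt_of_le (by positivity) (habs ξ)
      rw [Complex.norm_cpow_of_ne_zero (by simpa using norm_ne_zero_iff.mp hzne.ne')]
      simp only [Complex.neg_re, Complex.ofReal_re, Complex.neg_im, Complex.ofReal_im, neg_zero,
        mul_zero, Real.exp_zero, div_one]
      rw [mul_assoc (‖Complex.Gamma (ν:ℂ)‖)]
      refine mul_le_mul_of_nonneg_left ?_ (norm_nonneg _)
      calc ‖(β:ℂ) + 2*Real.pi*ξ*Complex.I‖ ^ (-ν)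
          ≤ (min β 1 / 2 * (1 + ‖ξ‖)) ^ (-ν) := by
            apply Real.rpow_le_rpow_of_nonpos (by positivity) (habs ξ) (by linarith)
        _ = (min β 1 / 2) ^ (-ν) * (1 + ‖ξ‖) ^ (-ν) := by
            rw [Real.mul_rpow (by positivity) (by positivity)]
  -- continuity of f at p
  have hf_cont : ContinuousAt f p := by
    have hev : f =ᶠ[𝓝 p] (fun t : ℝ => (t:ℂ) ^ ((ν:ℂ)-1) * Complex.exp (-((β:ℂ)*t))) := by
      filter_upwards [Ioi_mem_nhds hp] with t ht
      exact Set.indicator_of_mem ht _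
    refine ContinuousAt.congr ?_ hev.symm
    exact (Complex.continuousAt_ofReal_cpow_const p _ (Or.inr hp.ne')).mul
      ((Complex.continuous_exp.comp
        ((continuous_const.mul Complex.continuous_ofReal).neg)).continuousAt)
  have hinv := hf_int.fourierInv_fourier_eq hFf_int hf_cont
  -- rewrite inverse Fourier integral
  have hG : Complex.Gamma ν ≠ 0 := by
    rw [Complex.Gamma_ofReal]
    exact_mod_cast (Real.Gamma_pos_of_pos hν0).ne'
  -- change of variables in the target
  set F : ℝ → ℂ := fun x => ((β : ℂ) - Complex.I * x) ^ (-(ν : ℂ)) * Complex.exp (-(Complex.I * p * x)) with hF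
  have hcv := MeasureTheory.Measure.integral_comp_mul_left F (-(2*Real.pi))
  have h2π : |(-(2*Real.pi))⁻¹| = (2*Real.pi)⁻¹ := by
    rw [abs_inv, abs_neg, abs_of_pos (by positivity)]
  rw [h2π] at hcv
  have hπne : (2*Real.pi) ≠ 0 := by positivity
  have key : (∫ x : ℝ, F x) = (2*Real.pi) • ∫ x : ℝ, F (-(2*Real.pi) * x) := by
    rw [hcv, smul_smul, mul_inv_cancel₀ hπne, one_smul]
  rw [hF] at key
  rw [key]
  -- identify the integral with the inverse Fourier transform
  have hinv' : 𝓕⁻ (𝓕 f) p = ∫ ξ : ℝ, Complex.exp (↑(2 * Real.pi * (ξ*p)) * Complex.I) • (𝓕 f) ξ := by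
    rw [Real.fourierInv_eq']
    simp only [RCLike.inner_apply, conj_trivial, mul_comm]
  have hmatch : ∀ ξ : ℝ, F (-(2*Real.pi) * ξ)
      = (1 / Complex.Gamma ν) * (Complex.exp (↑(2 * Real.pi * (ξ*p)) * Complex.I) • (𝓕 f) ξ) := by
    intro ξ
    rw [hFf ξ, smul_eq_mul, hF]
    have hb : ((β : ℂ) - Complex.I * (↑(-(2*Real.pi) * ξ) : ℂ)) = (β:ℂ) + 2*Real.pi*ξ*Complex.I := by
      push_cast; ring
    simp only []
    rw [hb]
    rw [show Complex.exp (-(Complex.I * p * (↑(-(2*Real.pi)*ξ):ℂ))) = Complex.exp (↑(2 * Real.pi * (ξ*p)) * Complex.I) by congr 1; push_cast; ring]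
    field_simp
  rw [show (fun x : ℝ => ((β : ℂ) - Complex.I * ↑(-(2*Real.pi) * x)) ^ (-(ν : ℂ)) * Complex.exp (-(Complex.I * p * ↑(-(2*Real.pi) * x)))) = fun ξ : ℝ => (1 / Complex.Gamma ν) * (Complex.exp (↑(2 * Real.pi * (ξ*p)) * Complex.I) • (𝓕 f) ξ) from funext fun ξ => hmatch ξ]
  rw [integral_const_mul, ← hinv', hinv]
  -- finish : f p = p^(ν-1) e^{-βp}
  rw [hf, Set.indicator_of_mem (mem_Ioi.mpr hp)]
  rw [real_smul]
  push_cast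
  field_simp
end
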